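/- For unary encoding with the ε-LDP equality constraint p = q·e^ε/(1-q+q·e^ε), the approximate variance function q ↦ (1-q+q·e^ε)²/(N·q·(1-q)·(e^ε-1)²) over q ∈ (0,1) is minimized at q = 1/(e^ε+1), where it attains the value 4e^ε/(N(e^ε-1)²). -/

import Mathlib

theorem oue_variance_minimizer (N : ℕ) (hN : 0 < N) (ε : ℝ) (hε : 0 < ε)
    (Var : ℝ → ℝ)
    (hVar : ∀ q, Var q =
      (1 - q + q * Real.exp ε) ^ 2 / (N * q * (1 - q) * (Real.exp ε - 1) ^ 2)) :
    (∀ q, 0 < q → q < 1 → Var (1 / (Real.exp ε + 1)) ≤ Var q) ∧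
      Var (1 / (Real.exp ε + 1)) = 4 * Real.exp ε / (N * (Real.exp ε - 1) ^ 2) := by
  set e := Real.exp ε with he_def
  have he : 1 < e := by
    rw [he_def, show (1:ℝ) = Real.exp 0 by simp]
    exact Real.exp_lt_exp.mpr hε
  have hN' : (0:ℝ) < N := by exact_mod_cast hN
  have he1 : (0:ℝ) < e - 1 := by linarith
  have hval : Var (1 / (e + 1)) = 4 * e / (N * (e - 1) ^ 2) := by
    rw [hVar]
    have h1 : (0:ℝ) < e + 1 := by linarith
    have he0 : e ≠ 0 := ne_of_gt (by linarith)
    field_simp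
    ring_nf
    rw [pow_two, mul_assoc e e e⁻¹, mul_inv_cancel₀ he0, mul_one]
  refine ⟨fun q hq0 hq1 => ?_, hval⟩
  rw [hval, hVar]
  have hq1' : (0:ℝ) < 1 - q := by linarith
  have hden : (0:ℝ) < N * q * (1 - q) * (e - 1) ^ 2 := by positivity
  have hden2 : (0:ℝ) < N * (e - 1) ^ 2 := by positivity
  rw [div_le_div_iff₀ hden2 hden]
  nlinarith [sq_nonneg (1 - q * (e + 1)), mul_pos hN' (pow_pos he1 2), mul_nonneg (le_of_lt (mul_pos hN' (pow_pos he1 2))) (sq_nonneg (1 - q * (e + 1)))]
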